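/- Let K be a compact Hausdorff space, ι an uncountable type, and U : ι → Set K a family of pairwise disjoint nonempty clopen subsets of K such that each U α admits a Cantor scheme of clopen subsets of K with A [] = U α. Then there exists a linear isometry T : c₀(ι) →ₗᵢ C(K, ℝ) such that for every g ≠ 0 the range of T g has cardinality continuum: Cardinal.mk ↥(Set.range (T g)) = Cardinal.continuum. -/

import Mathlib

open scoped ZeroAtInfty

/-- A Cantor scheme of clopen subsets of `X ⊆ K`. -/
def IsClopenCantorScheme {K : Type*} [TopologicalSpace K] (X : Set K)
    (A : List Bool → Set K) : Prop :=
  A [] = X ∧ (∀ s, (A s).Nonempty) ∧ (∀ s, IsClopen (A s)) ∧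
    (∀ (s : List Bool) (i : Bool), A (s ++ [i]) ⊆ A s) ∧
    ∀ s : List Bool, A (s ++ [false]) ∩ A (s ++ [true]) = ∅

namespace Stmt3Aux

variable {K : Type*} [TopologicalSpace K]

/-- Union of the "true" children at level `n`. -/
def B (A : List Bool → Set K) (n : ℕ) : Set K :=
  ⋃ v : Fin n → Bool, A (List.ofFn v ++ [true])

/-- Prefix of length `n` of the branch `b`. -/
def pre (b : ℕ → Bool) (n : ℕ) : List Bool := List.ofFn (fun i : Fin n => b i)

lemma pre_succ (b : ℕ → Bool) (n : ℕ) : pre b (n + 1) = pre b n ++ [b n] := by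
  rw [pre, List.ofFn_succ']
  simp [pre, List.concat_eq_append]

variable {X : Set K} {A : List Bool → Set K}

lemma subset_root (hA : IsClopenCantorScheme X A) (s : List Bool) : A s ⊆ X := by
  induction s using List.reverseRecOn with
  | nil => rw [hA.1]
  | append_singleton s i ih => exact (hA.2.2.2.1 s i).trans ih

lemma disjoint_of_ne (hA : IsClopenCantorScheme X A) :
    ∀ (n : ℕ) (s t : List Bool), s.length = n → t.length = n → s ≠ t → A s ∩ A t = ∅ := by
  intro n
  induction n with
  | zero =>
    intro s t hs ht hst
    rw [List.length_eq_zero_iff] at hs ht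
    exact absurd (hs.trans ht.symm) hst
  | succ n ih =>
    intro s t hs ht hst
    rcases s.eq_nil_or_concat with rfl | ⟨s', i, rfl⟩
    · simp at hs
    rcases t.eq_nil_or_concat with rfl | ⟨t', j, rfl⟩
    · simp at ht
    simp only [List.concat_eq_append] at *
    simp only [List.length_append, List.length_singleton] at hs ht
    by_cases hst' : s' = t'
    · subst hst'
      have hij : i ≠ j := by rintro rfl; exact hst rfl
      cases i <;> cases j <;> first
        | exact absurd rfl hij
        | exact hA.2.2.2.2 s'
        | (rw [Set.inter_comm]; exact hA.2.2.2.2 s')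
    · apply Set.eq_empty_of_subset_empty
      calc A (s' ++ [i]) ∩ A (t' ++ [j]) ⊆ A s' ∩ A t' :=
            Set.inter_subset_inter (hA.2.2.2.1 s' i) (hA.2.2.2.1 t' j)
        _ = ∅ := ih s' t' (by omega) (by omega) hst'

lemma isClopen_B (hA : IsClopenCantorScheme X A) (n : ℕ) : IsClopen (B A n) :=
  isClopen_iUnion_of_finite fun v => hA.2.2.1 _

lemma B_subset (hA : IsClopenCantorScheme X A) (n : ℕ) : B A n ⊆ X := by
  apply Set.iUnion_subset
  intro v
  exact subset_root hA _

lemma mem_B_iff (hA : IsClopenCantorScheme X A) {b : ℕ → Bool} {x : K}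
    (hx : ∀ n, x ∈ A (pre b n)) (n : ℕ) : x ∈ B A n ↔ b n = true := by
  constructor
  · intro hxB
    rcases Set.mem_iUnion.mp hxB with ⟨v, hv⟩
    have hlen : (List.ofFn v ++ [true]).length = n + 1 := by simp
    have hlen2 : (pre b (n + 1)).length = n + 1 := by simp [pre]
    have heq : List.ofFn v ++ [true] = pre b (n + 1) := by
      by_contra h
      have := disjoint_of_ne hA (n + 1) _ _ hlen hlen2 h
      exact absurd (Set.mem_inter hv (hx (n + 1))) (by rw [this]; exact Set.notMem_empty x)
    rw [pre_succ] at heq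
    have := (List.append_inj heq (by simp [pre])).2
    simpa using this.symm
  · intro hbn
    have : x ∈ A (pre b n ++ [true]) := by
      rw [← hbn, ← pre_succ]; exact hx (n + 1)
    exact Set.mem_iUnion.mpr ⟨fun i : Fin n => b i, this⟩

lemma exists_branch_pt (hA : IsClopenCantorScheme X A) (b : ℕ → Bool) [CompactSpace K]
    [T2Space K] : ∃ x, ∀ n, x ∈ A (pre b n) := by
  have h := IsCompact.nonempty_iInter_of_sequence_nonempty_isCompact_isClosed
    (fun n => A (pre b n))
    (fun n => by
      show A (pre b (n+1)) ⊆ A (pre b n)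
      rw [pre_succ]; exact hA.2.2.2.1 _ _)
    (fun n => hA.2.1 _)
    ((hA.2.2.1 _).isClosed.isCompact)
    (fun n => (hA.2.2.1 _).isClosed)
  obtain ⟨x, hx⟩ := h
  exact ⟨x, fun n => Set.mem_iInter.mp hx n⟩

/-- The auxiliary continuous function built from a Cantor scheme. -/
noncomputable def psi (A : List Bool → Set K) (x : K) : ℝ :=
  ∑' n : ℕ, Set.indicator (B A n) (fun _ => 2 * 3⁻¹ * (3:ℝ)⁻¹ ^ n) x

lemma summable_u : Summable (fun n : ℕ => 2 * 3⁻¹ * (3:ℝ)⁻¹ ^ n) :=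
  (summable_geometric_of_lt_one (by norm_num) (by norm_num)).mul_left _

lemma tsum_u : ∑' n : ℕ, 2 * 3⁻¹ * (3:ℝ)⁻¹ ^ n = 1 := by
  rw [tsum_mul_left, tsum_geometric_of_lt_one (by norm_num) (by norm_num)]
  norm_num

lemma indicator_nonneg' (n : ℕ) (x : K) :
    0 ≤ Set.indicator (B A n) (fun _ => 2 * 3⁻¹ * (3:ℝ)⁻¹ ^ n) x :=
  Set.indicator_nonneg (fun _ _ => by positivity) x

lemma indicator_le (n : ℕ) (x : K) :
    Set.indicator (B A n) (fun _ => 2 * 3⁻¹ * (3:ℝ)⁻¹ ^ n) x ≤ 2 * 3⁻¹ * (3:ℝ)⁻¹ ^ n := by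
  classical
  rw [Set.indicator_apply]
  split
  · exact le_rfl
  · positivity

lemma summable_indicator (x : K) :
    Summable (fun n : ℕ => Set.indicator (B A n) (fun _ => 2 * 3⁻¹ * (3:ℝ)⁻¹ ^ n) x) :=
  Summable.of_nonneg_of_le (fun n => indicator_nonneg' n x) (fun n => indicator_le n x) summable_u

lemma continuous_psi (hA : IsClopenCantorScheme X A) : Continuous (psi A) := by
  apply continuous_tsum (u := fun n : ℕ => 2 * 3⁻¹ * (3:ℝ)⁻¹ ^ n)
  · intro n
    apply continuous_indicator
    · intro a ha
      rw [(isClopen_B hA n).frontier_eq] at ha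
      exact absurd ha (Set.notMem_empty a)
    · exact continuous_const.continuousOn
  · exact summable_u
  · intro n x
    rw [Real.norm_eq_abs, abs_of_nonneg (indicator_nonneg' n x)]
    exact indicator_le n x

lemma psi_nonneg (x : K) : 0 ≤ psi A x :=
  tsum_nonneg fun n => indicator_nonneg' n x

lemma psi_le_one (x : K) : psi A x ≤ 1 := by
  rw [← tsum_u]
  exact Summable.tsum_le_tsum (fun n => indicator_le n x) (summable_indicator x) summable_u

lemma psi_eq_zero (hA : IsClopenCantorScheme X A) {x : K} (hx : x ∉ X) : psi A x = 0 := by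
  rw [psi]
  convert tsum_zero with n
  exact Set.indicator_of_notMem (fun h => hx (B_subset hA n h)) _

lemma psi_branch (hA : IsClopenCantorScheme X A) {b : ℕ → Bool} {x : K}
    (hx : ∀ n, x ∈ A (pre b n)) :
    psi A x = 2 * 3⁻¹ * Cardinal.cantorFunction 3⁻¹ b := by
  classical
  rw [psi, Cardinal.cantorFunction, ← tsum_mul_left]
  congr 1
  funext n
  rw [Set.indicator_apply]
  by_cases hbn : b n = true
  · rw [if_pos ((mem_B_iff hA hx n).mpr hbn), Cardinal.cantorFunctionAux_true hbn]
  · rw [if_neg (fun h => hbn ((mem_B_iff hA hx n).mp h)),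
      Cardinal.cantorFunctionAux_false (Bool.eq_false_iff.mpr hbn), mul_zero]

lemma cantorFunction_true : Cardinal.cantorFunction 3⁻¹ (fun _ => true) = (2:ℝ)⁻¹ * 3 := by
  rw [Cardinal.cantorFunction]
  have : ∀ n : ℕ, Cardinal.cantorFunctionAux 3⁻¹ (fun _ => true) n = (3:ℝ)⁻¹ ^ n :=
    fun n => Cardinal.cantorFunctionAux_true rfl
  rw [tsum_congr this, tsum_geometric_of_lt_one (by norm_num) (by norm_num)]
  norm_num

/-- Packaged existence: a continuous `[0,1]`-valued function supported in `X`,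
together with branch points realizing Cantor-function values. -/
lemma exists_psi [CompactSpace K] [T2Space K] (hA : IsClopenCantorScheme X A) :
    ∃ (h : K → ℝ) (pt : (ℕ → Bool) → K),
      Continuous h ∧ (∀ x, 0 ≤ h x) ∧ (∀ x, h x ≤ 1) ∧ (∀ x, x ∉ X → h x = 0) ∧
      (∀ b, pt b ∈ X) ∧
      (∀ b, h (pt b) = 2 * 3⁻¹ * Cardinal.cantorFunction 3⁻¹ b) := by
  choose pt hpt using fun b => exists_branch_pt hA b
  refine ⟨psi A, pt, continuous_psi hA, psi_nonneg, psi_le_one,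
    fun x hx => psi_eq_zero hA hx, fun b => ?_, fun b => psi_branch hA (hpt b)⟩
  have := hpt b 0
  rwa [show pre b 0 = [] from rfl, hA.1] at this

end Stmt3Aux

open Stmt3Aux

/-- Under the hypotheses on `K`, `ι`, `U`, the set of functions in `C(K, ℝ)`
whose range has cardinality continuum contains, up to the zero function, an isometric
copy of `c₀(ι)`. -/
theorem stmt3 {K : Type*} [TopologicalSpace K] [CompactSpace K] [T2Space K]
    {ι : Type*} [TopologicalSpace ι] [DiscreteTopology ι] [Uncountable ι]
    (U : ι → Set K) (hne : ∀ α, (U α).Nonempty) (hclopen : ∀ α, IsClopen (U α))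
    (hdisj : ∀ α β, α ≠ β → Disjoint (U α) (U β))
    (hscheme : ∀ α, ∃ A : List Bool → Set K, IsClopenCantorScheme (U α) A) :
    ∃ T : C₀(ι, ℝ) →ₗᵢ[ℝ] C(K, ℝ),
      ∀ g : C₀(ι, ℝ), g ≠ 0 →
        Cardinal.mk ↥(Set.range (T g)) = Cardinal.continuum := by
  classical
  choose A hA using hscheme
  choose h pt hcont hnonneg hle1 hvanish hptmem hptval using fun α => exists_psi (hA α)
  -- the underlying map
  set S : C₀(ι, ℝ) → K → ℝ := fun g x => ∑' α, g α * h α x with hS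
  -- pointwise formulas
  have key1 : ∀ (g : C₀(ι, ℝ)) (α) (x), x ∈ U α → S g x = g α * h α x := by
    intro g α x hx
    apply tsum_eq_single
    intro β hβ
    have hxβ : x ∉ U β := fun hxb => (hdisj β α hβ).le_bot ⟨hxb, hx⟩
    rw [hvanish β x hxβ, mul_zero]
  have key0 : ∀ (g : C₀(ι, ℝ)) (x), (∀ α, x ∉ U α) → S g x = 0 := by
    intro g x hx
    have : (fun α => g α * h α x) = fun _ => 0 := by
      funext α; rw [hvanish α x (hx α), mul_zero]
    rw [hS]; simp only [this, tsum_zero]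
  -- a bound on |g α|
  have hgα : ∀ (g : C₀(ι, ℝ)) (α), ‖g α‖ ≤ ‖g‖ := by
    intro g α
    have := BoundedContinuousFunction.norm_coe_le_norm g.toBCF α
    rwa [ZeroAtInftyContinuousMap.norm_toBCF_eq_norm] at this
  -- pointwise bound
  have bound : ∀ (g : C₀(ι, ℝ)) (x), ‖S g x‖ ≤ ‖g‖ := by
    intro g x
    by_cases hx : ∃ α, x ∈ U α
    · obtain ⟨α, hα⟩ := hx
      rw [key1 g α x hα, norm_mul]
      calc ‖g α‖ * ‖h α x‖ ≤ ‖g‖ * 1 := by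
            apply mul_le_mul (hgα g α) _ (norm_nonneg _) (norm_nonneg g)
            rw [Real.norm_eq_abs, abs_of_nonneg (hnonneg α x)]
            exact hle1 α x
        _ = ‖g‖ := mul_one _
    · push_neg at hx
      rw [key0 g x hx, norm_zero]
      exact norm_nonneg g
  -- finiteness of large values
  have hfin : ∀ (g : C₀(ι, ℝ)) (ε : ℝ), 0 < ε → {α | ε ≤ ‖g α‖}.Finite := by
    intro g ε hε
    have hcof : Filter.Tendsto g (Filter.cofinite) (nhds 0) := by
      rw [← Filter.cocompact_eq_cofinite ι]
      exact ZeroAtInftyContinuousMap.zero_at_infty' g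
    rw [Metric.tendsto_nhds] at hcof
    have h2 := hcof ε hε
    rw [Filter.eventually_cofinite] at h2
    convert h2 using 1
    ext α
    simp [dist_zero_right, not_lt]
  -- continuity of S g
  have cont : ∀ g : C₀(ι, ℝ), Continuous (S g) := by
    intro g
    have hpos : ∀ n : ℕ, (0:ℝ) < 1 / (n + 1) := fun n => by positivity
    set F : ℕ → K → ℝ := fun n x =>
      ∑ α ∈ (hfin g (1 / (n + 1)) (hpos n)).toFinset, g α * h α x with hF
    have hFcont : ∀ n, Continuous (F n) :=
      fun n => continuous_finset_sum _ fun α _ => continuous_const.mul (hcont α)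
    have happrox : ∀ (n : ℕ) (x : K), dist (F n x) (S g x) ≤ 1 / (n + 1) := by
      intro n x
      by_cases hx : ∃ α, x ∈ U α
      · obtain ⟨α, hα⟩ := hx
        rw [key1 g α x hα]
        have hzero : ∀ β, β ≠ α → g β * h β x = 0 := by
          intro β hβ
          have hxβ : x ∉ U β := fun hxb => (hdisj β α hβ).le_bot ⟨hxb, hα⟩
          rw [hvanish β x hxβ, mul_zero]
        by_cases hmem : α ∈ (hfin g (1 / (n + 1)) (hpos n)).toFinset
        · rw [hF]
          simp only
          rw [Finset.sum_eq_single_of_mem α hmem (fun β _ hβ => hzero β hβ), dist_self]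
          exact le_of_lt (hpos n)
        · have hFn0 : F n x = 0 :=
            Finset.sum_eq_zero fun β hβ => hzero β (fun e => hmem (e ▸ hβ))
          rw [hFn0, dist_zero_left, norm_mul]
          have hα_small : ‖g α‖ < 1 / (n + 1) := by
            by_contra hcon
            exact hmem (by simp only [Set.Finite.mem_toFinset, Set.mem_setOf_eq]; linarith)
          calc ‖g α‖ * ‖h α x‖ ≤ ‖g α‖ * 1 := by
                apply mul_le_mul_of_nonneg_left _ (norm_nonneg _)
                rw [Real.norm_eq_abs, abs_of_nonneg (hnonneg α x)]
                exact hle1 α x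
            _ ≤ 1 / (n + 1) := by rw [mul_one]; exact le_of_lt hα_small
      · push_neg at hx
        have h1 : F n x = 0 := Finset.sum_eq_zero fun β _ => by
          rw [hvanish β x (hx β), mul_zero]
        rw [h1, key0 g x hx, dist_self]
        exact le_of_lt (hpos n)
    have huni : TendstoUniformly F (S g) Filter.atTop := by
      rw [Metric.tendstoUniformly_iff]
      intro ε hε
      obtain ⟨N, hN⟩ := exists_nat_one_div_lt hε
      rw [Filter.eventually_atTop]
      refine ⟨N, fun n hn x => ?_⟩
      rw [dist_comm]
      calc dist (F n x) (S g x) ≤ 1 / (n + 1) := happrox n x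
        _ ≤ 1 / (N + 1) := by
            apply one_div_le_one_div_of_le (by positivity)
            exact_mod_cast by omega
        _ < ε := hN
    exact huni.continuous (Filter.Eventually.of_forall hFcont).frequently
  -- value at the all-true branch point
  have hone : ∀ α, h α (pt α (fun _ => true)) = 1 := by
    intro α
    rw [hptval α (fun _ => true), cantorFunction_true]
    norm_num
  -- the continuous map
  set Tfun : C₀(ι, ℝ) → C(K, ℝ) := fun g => ⟨S g, cont g⟩ with hTfun
  have hT_apply : ∀ (g : C₀(ι, ℝ)) (x : K), Tfun g x = S g x := fun g x => rfl
  -- build the linear isometry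
  have hadd : ∀ g g' : C₀(ι, ℝ), Tfun (g + g') = Tfun g + Tfun g' := by
    intro g g'
    ext x
    simp only [hT_apply, ContinuousMap.add_apply]
    by_cases hx : ∃ α, x ∈ U α
    · obtain ⟨α, hα⟩ := hx
      rw [key1 _ α x hα, key1 _ α x hα, key1 _ α x hα,
        ZeroAtInftyContinuousMap.coe_add, Pi.add_apply, add_mul]
    · push_neg at hx
      rw [key0 _ x hx, key0 _ x hx, key0 _ x hx, add_zero]
  have hsmul : ∀ (c : ℝ) (g : C₀(ι, ℝ)), Tfun (c • g) = c • Tfun g := by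
    intro c g
    ext x
    simp only [hT_apply, ContinuousMap.smul_apply]
    by_cases hx : ∃ α, x ∈ U α
    · obtain ⟨α, hα⟩ := hx
      rw [key1 _ α x hα, key1 _ α x hα,
        ZeroAtInftyContinuousMap.coe_smul, Pi.smul_apply, smul_eq_mul, smul_eq_mul, mul_assoc]
    · push_neg at hx
      rw [key0 _ x hx, key0 _ x hx, smul_eq_mul, mul_zero]
  have hnorm : ∀ g : C₀(ι, ℝ), ‖Tfun g‖ = ‖g‖ := by
    intro g
    apply le_antisymm
    · rw [ContinuousMap.norm_le _ (norm_nonneg g)]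
      intro x
      exact bound g x
    · rw [← ZeroAtInftyContinuousMap.norm_toBCF_eq_norm,
        BoundedContinuousFunction.norm_le (norm_nonneg _)]
      intro α
      have hx := hptmem α (fun _ => true)
      have hval : S g (pt α (fun _ => true)) = g α := by
        rw [key1 g α _ hx, hone α, mul_one]
      calc ‖g.toBCF α‖ = ‖Tfun g (pt α (fun _ => true))‖ := by
            rw [hT_apply, hval]; rfl
        _ ≤ ‖Tfun g‖ := ContinuousMap.norm_coe_le_norm (Tfun g) _
  set TLI : C₀(ι, ℝ) →ₗᵢ[ℝ] C(K, ℝ) :=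
    { toFun := Tfun
      map_add' := hadd
      map_smul' := hsmul
      norm_map' := hnorm } with hTLI
  refine ⟨TLI, ?_⟩
  intro g hg
  have hex : ∃ α, g α ≠ 0 := by
    by_contra hcon
    push_neg at hcon
    exact hg (by ext α; exact hcon α)
  obtain ⟨α, hgα0⟩ := hex
  have hrange : Set.range ⇑(TLI g) = Set.range (S g) := rfl
  apply le_antisymm
  · exact (Cardinal.mk_set_le _).trans_eq Cardinal.mk_real
  · have hcinj := Cardinal.cantorFunction_injective
      (by norm_num : (0:ℝ) < 3⁻¹) (by norm_num : (3:ℝ)⁻¹ < 1 / 2)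
    have hval : ∀ b : ℕ → Bool,
        S g (pt α b) = g α * (2 * 3⁻¹ * Cardinal.cantorFunction 3⁻¹ b) := by
      intro b; rw [key1 g α _ (hptmem α b), hptval]
    have hinj : Function.Injective (fun b : ℕ → Bool =>
        (⟨S g (pt α b), Set.mem_range_self _⟩ : Set.range (S g))) := by
      intro b₁ b₂ hb
      have hb' : S g (pt α b₁) = S g (pt α b₂) := congrArg Subtype.val hb
      rw [hval, hval] at hb'
      have h1 := mul_left_cancel₀ hgα0 hb'
      have h2 := mul_left_cancel₀ (by norm_num : (2 * 3⁻¹ : ℝ) ≠ 0) h1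
      exact hcinj h2
    have hcard : Cardinal.continuum ≤ Cardinal.mk ↥(Set.range (S g)) := by
      have := Cardinal.mk_le_of_injective hinj
      rwa [← Cardinal.power_def, Cardinal.mk_bool, Cardinal.mk_nat,
        Cardinal.two_power_aleph0] at this
    rwa [hrange]
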